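/- For the column-type elementary enlargement as well, the signature of the symmetrization is preserved: if V is an n × n integer matrix, b ∈ M_{n×1}(ℤ), and W = [[V, b, 0], [0, 0, 1], [0, 0, 0]], then σ(W + Wᵀ) = σ(V + Vᵀ). -/

import Mathlib

open Matrix Finset

/-- The signature of a real symmetric (= Hermitian) matrix: the number of positive
eigenvalues minus the number of negative eigenvalues, counted with multiplicity.
(Defined to be `0` on non-symmetric matrices.) -/
noncomputable def signature {n : Type*} [Fintype n] [DecidableEq n]
    (A : Matrix n n ℝ) : ℤ :=
  if hA : A.IsHermitian then
    ((Finset.univ.filter fun i => 0 < hA.eigenvalues i).card : ℤ) -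
    ((Finset.univ.filter fun i => hA.eigenvalues i < 0).card : ℤ)
  else 0

/-- The column-type elementary enlargement `W = [[V, b, 0], [0, 0, 1], [0, 0, 0]]`. -/
def colEnlarge {n : ℕ} (V : Matrix (Fin n) (Fin n) ℤ) (b : Fin n → ℤ) :
    Matrix (Fin n ⊕ Fin 2) (Fin n ⊕ Fin 2) ℤ :=
  Matrix.fromBlocks V
    (Matrix.of fun (i : Fin n) (j : Fin 2) => if j = 0 then b i else 0)
    0
    !![0, 1; 0, 0]


variable {n m : Type*} [Fintype n] [DecidableEq n] [Fintype m] [DecidableEq m]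

/-- Key dimension-counting lemma. -/
lemma key_count (M : Matrix n n ℝ) (U U' : Submodule ℝ (EuclideanSpace ℝ n))
    (hU : ∀ x ∈ U, x ≠ 0 → 0 < x ⬝ᵥ M *ᵥ x) (hU' : ∀ x ∈ U', x ⬝ᵥ M *ᵥ x ≤ 0) :
    Module.finrank ℝ U + Module.finrank ℝ U' ≤ Fintype.card n := by
  have hbot : U ⊓ U' = ⊥ := by
    rw [Submodule.eq_bot_iff]
    intro x hx
    by_contra hx0
    exact absurd (hU' x hx.2) (not_le.2 (hU x hx.1 hx0))
  have := Submodule.finrank_sup_add_finrank_inf_eq U U'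
  rw [hbot] at this
  simp only [finrank_bot, add_zero] at this
  rw [← this]
  calc Module.finrank ℝ ↥(U ⊔ U') ≤ Module.finrank ℝ (EuclideanSpace ℝ n) :=
        Submodule.finrank_le _
    _ = Fintype.card n := finrank_euclideanSpace

lemma quad_repr {A : Matrix n n ℝ} (hA : A.IsHermitian) (x : EuclideanSpace ℝ n) :
    x ⬝ᵥ A *ᵥ x = ∑ i, hA.eigenvalues i * (hA.eigenvectorBasis.repr x i)^2 := by
  have hAt : Aᵀ = A := by
    ext i j
    have := congrFun (congrFun hA.eq i) j
    simpa using this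
  have hrepr : ∀ i, hA.eigenvectorBasis.repr (WithLp.toLp 2 (A *ᵥ x)) i
      = hA.eigenvalues i * hA.eigenvectorBasis.repr x i := by
    intro i
    rw [OrthonormalBasis.repr_apply_apply, OrthonormalBasis.repr_apply_apply]
    have h1 : (inner ℝ (hA.eigenvectorBasis i) (WithLp.toLp 2 (A *ᵥ x)) : ℝ)
        = (hA.eigenvectorBasis i : n → ℝ) ⬝ᵥ (A *ᵥ x) := by
      simp [PiLp.inner_apply, dotProduct, mul_comm]
    have h2 : (inner ℝ (hA.eigenvectorBasis i) x : ℝ)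
        = (hA.eigenvectorBasis i : n → ℝ) ⬝ᵥ (x : n → ℝ) := by
      simp [PiLp.inner_apply, dotProduct, mul_comm]
    rw [h1, h2, Matrix.dotProduct_mulVec, ← Matrix.mulVec_transpose, hAt]
    erw [hA.mulVec_eigenvectorBasis]
    simp [dotProduct, Finset.mul_sum, mul_assoc]
  have h3 : x ⬝ᵥ A *ᵥ x = (inner ℝ x (WithLp.toLp 2 (A *ᵥ x)) : ℝ) := by
    simp [PiLp.inner_apply, dotProduct, mul_comm]
  rw [h3, ← hA.eigenvectorBasis.repr.inner_map_map x (WithLp.toLp 2 (A *ᵥ x))]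
  rw [PiLp.inner_apply]
  refine Finset.sum_congr rfl fun i _ => ?_
  rw [hrepr i]
  simp [pow_two]
  ring

section EigSpan
variable {A : Matrix n n ℝ} (hA : A.IsHermitian)

/-- span of eigenvectors indexed by S -/
noncomputable def eigSpan (S : Finset n) : Submodule ℝ (EuclideanSpace ℝ n) :=
  Submodule.span ℝ (hA.eigenvectorBasis '' (S : Set n))

lemma finrank_eigSpan (S : Finset n) : Module.finrank ℝ (eigSpan hA S) = S.card := by
  have li : LinearIndependent ℝ (fun i : (S : Set n) => hA.eigenvectorBasis i) :=
    hA.eigenvectorBasis.orthonormal.linearIndependent.comp _ Subtype.val_injective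
  have : Set.range (fun i : (S : Set n) => hA.eigenvectorBasis i)
      = hA.eigenvectorBasis '' (S : Set n) := by
    ext y; simp
  rw [eigSpan, ← this, finrank_span_eq_card li]
  simp

lemma repr_eq_zero_of_mem_eigSpan (S : Finset n) {x : EuclideanSpace ℝ n}
    (hx : x ∈ eigSpan hA S) {j : n} (hj : j ∉ S) :
    hA.eigenvectorBasis.repr x j = 0 := by
  induction hx using Submodule.span_induction with
  | mem y hy =>
    obtain ⟨i, hiS, rfl⟩ := hy
    rw [OrthonormalBasis.repr_self]
    have : i ≠ j := by rintro rfl; exact hj hiS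
    simp [EuclideanSpace.single_apply, this.symm]
  | zero => simp
  | add y z _ _ hy hz => simp [hy, hz]
  | smul c y _ hy => simp [hy]

lemma quad_eigSpan (S : Finset n) {x : EuclideanSpace ℝ n} (hx : x ∈ eigSpan hA S) :
    x ⬝ᵥ A *ᵥ x = ∑ i ∈ S, hA.eigenvalues i * (hA.eigenvectorBasis.repr x i)^2 := by
  rw [quad_repr hA x]
  refine (Finset.sum_subset (Finset.subset_univ S) fun j _ hj => ?_).symm
  rw [repr_eq_zero_of_mem_eigSpan hA S hx hj]
  simp

lemma exists_repr_ne_zero_of_mem_eigSpan (S : Finset n) {x : EuclideanSpace ℝ n}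
    (hx : x ∈ eigSpan hA S) (hx0 : x ≠ 0) :
    ∃ i ∈ S, hA.eigenvectorBasis.repr x i ≠ 0 := by
  by_contra h
  push_neg at h
  apply hx0
  have : hA.eigenvectorBasis.repr x = 0 := by
    ext i
    by_cases hi : i ∈ S
    · simpa using h i hi
    · simpa using repr_eq_zero_of_mem_eigSpan hA S hx hi
  simpa using hA.eigenvectorBasis.repr.map_eq_zero_iff.mp this

end EigSpan

section Counts
variable {A : Matrix n n ℝ} (hA : A.IsHermitian)

noncomputable def posCard : ℕ := (Finset.univ.filter fun i => 0 < hA.eigenvalues i).card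
noncomputable def negCard : ℕ := (Finset.univ.filter fun i => hA.eigenvalues i < 0).card

lemma posOn_eigSpan_pos :
    ∀ x ∈ eigSpan hA (Finset.univ.filter fun i => 0 < hA.eigenvalues i),
      x ≠ 0 → 0 < x ⬝ᵥ A *ᵥ x := by
  intro x hx hx0
  rw [quad_eigSpan hA _ hx]
  obtain ⟨i, hiS, hi0⟩ := exists_repr_ne_zero_of_mem_eigSpan hA _ hx hx0
  refine Finset.sum_pos' (fun j hj => ?_) ⟨i, hiS, ?_⟩
  · have : 0 < hA.eigenvalues j := (Finset.mem_filter.mp hj).2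
    positivity
  · have h1 : 0 < hA.eigenvalues i := (Finset.mem_filter.mp hiS).2
    positivity

lemma nonposOn_eigSpan_nonpos :
    ∀ x ∈ eigSpan hA (Finset.univ.filter fun i => ¬ 0 < hA.eigenvalues i),
      x ⬝ᵥ A *ᵥ x ≤ 0 := by
  intro x hx
  rw [quad_eigSpan hA _ hx]
  refine Finset.sum_nonpos fun j hj => ?_
  have : hA.eigenvalues j ≤ 0 := not_lt.mp (Finset.mem_filter.mp hj).2
  have h2 : (0:ℝ) ≤ (hA.eigenvectorBasis.repr x j)^2 := sq_nonneg _
  exact mul_nonpos_of_nonpos_of_nonneg this h2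

lemma posOn_neg_eigSpan_neg :
    ∀ x ∈ eigSpan hA (Finset.univ.filter fun i => hA.eigenvalues i < 0),
      x ≠ 0 → 0 < x ⬝ᵥ (-A) *ᵥ x := by
  intro x hx hx0
  have : x ⬝ᵥ (-A) *ᵥ x = -(x ⬝ᵥ A *ᵥ x) := by
    rw [Matrix.neg_mulVec, dotProduct_neg]
  rw [this, neg_pos, quad_eigSpan hA _ hx]
  obtain ⟨i, hiS, hi0⟩ := exists_repr_ne_zero_of_mem_eigSpan hA _ hx hx0
  refine Finset.sum_neg' (fun j hj => ?_) ⟨i, hiS, ?_⟩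
  · have : hA.eigenvalues j < 0 := (Finset.mem_filter.mp hj).2
    have h2 : (0:ℝ) ≤ (hA.eigenvectorBasis.repr x j)^2 := sq_nonneg _
    exact mul_nonpos_of_nonpos_of_nonneg this.le h2
  · have h1 : hA.eigenvalues i < 0 := (Finset.mem_filter.mp hiS).2
    have h2 : (0:ℝ) < (hA.eigenvectorBasis.repr x i)^2 := by positivity
    exact mul_neg_of_neg_of_pos h1 h2

lemma nonposOn_neg_eigSpan_nonneg :
    ∀ x ∈ eigSpan hA (Finset.univ.filter fun i => ¬ hA.eigenvalues i < 0),
      x ⬝ᵥ (-A) *ᵥ x ≤ 0 := by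
  intro x hx
  have : x ⬝ᵥ (-A) *ᵥ x = -(x ⬝ᵥ A *ᵥ x) := by
    rw [Matrix.neg_mulVec, dotProduct_neg]
  rw [this, neg_nonpos, quad_eigSpan hA _ hx]
  refine Finset.sum_nonneg fun j hj => ?_
  have : 0 ≤ hA.eigenvalues j := not_lt.mp (Finset.mem_filter.mp hj).2
  positivity

end Counts

section Congr

noncomputable def mulVecEquiv (P : Matrix n n ℝ) (hP : Invertible P) :
    EuclideanSpace ℝ n ≃ₗ[ℝ] EuclideanSpace ℝ n where
  toFun x := WithLp.toLp 2 (P *ᵥ x)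
  map_add' x y := by simp [Matrix.mulVec_add]
  map_smul' c x := by simp [Matrix.mulVec_smul]
  invFun x := WithLp.toLp 2 (⅟P *ᵥ x)
  left_inv x := by simp [Matrix.mulVec_mulVec, invOf_mul_self]
  right_inv x := by simp [Matrix.mulVec_mulVec, mul_invOf_self]

lemma quad_congr {A P : Matrix n n ℝ} (u : n → ℝ) :
    u ⬝ᵥ ((Pᵀ * A * P) *ᵥ u) = (P *ᵥ u) ⬝ᵥ (A *ᵥ (P *ᵥ u)) := by
  rw [Matrix.mul_assoc, ← Matrix.mulVec_mulVec, Matrix.dotProduct_mulVec,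
    Matrix.vecMul_transpose, Matrix.mulVec_mulVec]

lemma posCard_le_of_congr {A B P : Matrix n n ℝ} (hA : A.IsHermitian) (hB : B.IsHermitian)
    (hP : Invertible P) (h : B = Pᵀ * A * P) : posCard hB ≤ posCard hA := by
  classical
  set e := mulVecEquiv P hP with he
  set U := Submodule.map e.toLinearMap
    (eigSpan hB (Finset.univ.filter fun i => 0 < hB.eigenvalues i)) with hUdef
  have hUrank : Module.finrank ℝ U = posCard hB := by
    rw [hUdef, LinearEquiv.finrank_map_eq, finrank_eigSpan]
    rfl
  have hUpos : ∀ x ∈ U, x ≠ 0 → 0 < x ⬝ᵥ A *ᵥ x := by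
    rintro x hx hx0
    obtain ⟨u, hu, rfl⟩ := hx
    have hu0 : u ≠ 0 := by rintro rfl; exact hx0 (map_zero _)
    have h1 := posOn_eigSpan_pos hB u hu hu0
    have h2 : e.toLinearMap u = P *ᵥ u := rfl
    rw [h2, ← quad_congr, ← h]
    exact h1
  have hkey := key_count A U
    (eigSpan hA (Finset.univ.filter fun i => ¬ 0 < hA.eigenvalues i))
    hUpos (nonposOn_eigSpan_nonpos hA)
  rw [hUrank, finrank_eigSpan] at hkey
  have hsplit := Finset.card_filter_add_card_filter_not
    (s := (Finset.univ : Finset n)) (p := fun i => 0 < hA.eigenvalues i)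
  simp only [Finset.card_univ] at hsplit
  have e1 : (Finset.univ.filter fun i => 0 < hA.eigenvalues i).card = posCard hA := rfl
  omega

lemma negCard_le_of_congr {A B P : Matrix n n ℝ} (hA : A.IsHermitian) (hB : B.IsHermitian)
    (hP : Invertible P) (h : B = Pᵀ * A * P) : negCard hB ≤ negCard hA := by
  classical
  have hneg : -B = Pᵀ * (-A) * P := by rw [h, Matrix.mul_neg, Matrix.neg_mul]
  set e := mulVecEquiv P hP with he
  set U := Submodule.map e.toLinearMap
    (eigSpan hB (Finset.univ.filter fun i => hB.eigenvalues i < 0)) with hUdef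
  have hUrank : Module.finrank ℝ U = negCard hB := by
    rw [hUdef, LinearEquiv.finrank_map_eq, finrank_eigSpan]
    rfl
  have hUpos : ∀ x ∈ U, x ≠ 0 → 0 < x ⬝ᵥ (-A) *ᵥ x := by
    rintro x hx hx0
    obtain ⟨u, hu, rfl⟩ := hx
    have hu0 : u ≠ 0 := by rintro rfl; exact hx0 (map_zero _)
    have h1 := posOn_neg_eigSpan_neg hB u hu hu0
    have h2 : e.toLinearMap u = P *ᵥ u := rfl
    rw [h2, ← quad_congr, ← hneg]
    exact h1
  have hkey := key_count (-A) U
    (eigSpan hA (Finset.univ.filter fun i => ¬ hA.eigenvalues i < 0))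
    hUpos (nonposOn_neg_eigSpan_nonneg hA)
  rw [hUrank, finrank_eigSpan] at hkey
  have hsplit := Finset.card_filter_add_card_filter_not
    (s := (Finset.univ : Finset n)) (p := fun i => hA.eigenvalues i < 0)
  simp only [Finset.card_univ] at hsplit
  have e1 : (Finset.univ.filter fun i => hA.eigenvalues i < 0).card = negCard hA := rfl
  omega

lemma inv_congr {A B P : Matrix n n ℝ} (hP : Invertible P) (h : B = Pᵀ * A * P) :
    A = (⅟P)ᵀ * B * ⅟P := by
  rw [h, ← Matrix.mul_assoc, ← Matrix.mul_assoc, ← Matrix.transpose_mul, mul_invOf_self,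
    Matrix.transpose_one, Matrix.one_mul, Matrix.mul_assoc, mul_invOf_self, Matrix.mul_one]

lemma posCard_congr {A B P : Matrix n n ℝ} (hA : A.IsHermitian) (hB : B.IsHermitian)
    (hP : Invertible P) (h : B = Pᵀ * A * P) : posCard hB = posCard hA :=
  le_antisymm (posCard_le_of_congr hA hB hP h)
    (posCard_le_of_congr hB hA (invertibleInvOf) (inv_congr hP h))

lemma negCard_congr {A B P : Matrix n n ℝ} (hA : A.IsHermitian) (hB : B.IsHermitian)
    (hP : Invertible P) (h : B = Pᵀ * A * P) : negCard hB = negCard hA :=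
  le_antisymm (negCard_le_of_congr hA hB hP h)
    (negCard_le_of_congr hB hA (invertibleInvOf) (inv_congr hP h))

end Congr

section Blocks

/-- linear equiv between functions on a sum type and pairs -/
noncomputable def sumEquiv :
    (EuclideanSpace ℝ n × EuclideanSpace ℝ m) ≃ₗ[ℝ] EuclideanSpace ℝ (n ⊕ m) where
  toFun p := WithLp.toLp 2 (Sum.elim p.1 p.2)
  map_add' p q := by ext i; cases i <;> rfl
  map_smul' c p := by ext i; cases i <;> rfl
  invFun x := (WithLp.toLp 2 (fun i => x (Sum.inl i)), WithLp.toLp 2 (fun j => x (Sum.inr j)))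
  left_inv p := rfl
  right_inv x := by ext i; cases i <;> rfl

noncomputable def prodEquivSub (U₁ : Submodule ℝ (EuclideanSpace ℝ n))
    (U₂ : Submodule ℝ (EuclideanSpace ℝ m)) : (U₁.prod U₂) ≃ₗ[ℝ] U₁ × U₂ where
  toFun z := (⟨z.1.1, z.2.1⟩, ⟨z.1.2, z.2.2⟩)
  map_add' z w := rfl
  map_smul' c z := rfl
  invFun p := ⟨(p.1.1, p.2.1), ⟨p.1.2, p.2.2⟩⟩
  left_inv z := rfl
  right_inv p := rfl

noncomputable def sumSpace (U₁ : Submodule ℝ (EuclideanSpace ℝ n))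
    (U₂ : Submodule ℝ (EuclideanSpace ℝ m)) : Submodule ℝ (EuclideanSpace ℝ (n ⊕ m)) :=
  Submodule.map (sumEquiv (n := n) (m := m)).toLinearMap (U₁.prod U₂)

lemma finrank_sumSpace (U₁ : Submodule ℝ (EuclideanSpace ℝ n))
    (U₂ : Submodule ℝ (EuclideanSpace ℝ m)) :
    Module.finrank ℝ (sumSpace U₁ U₂) = Module.finrank ℝ U₁ + Module.finrank ℝ U₂ := by
  rw [sumSpace, LinearEquiv.finrank_map_eq, (prodEquivSub U₁ U₂).finrank_eq,
    Module.finrank_prod]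

lemma mem_sumSpace {U₁ : Submodule ℝ (EuclideanSpace ℝ n)}
    {U₂ : Submodule ℝ (EuclideanSpace ℝ m)} {x : EuclideanSpace ℝ (n ⊕ m)}
    (hx : x ∈ sumSpace U₁ U₂) :
    ((WithLp.toLp 2 (fun i => x (Sum.inl i)) : EuclideanSpace ℝ n) ∈ U₁ ∧
      (WithLp.toLp 2 (fun j => x (Sum.inr j)) : EuclideanSpace ℝ m) ∈ U₂)
      ∧ x = Sum.elim (fun i => x (Sum.inl i)) (fun j => x (Sum.inr j)) := by
  obtain ⟨⟨a, b⟩, ⟨ha, hb⟩, rfl⟩ := hx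
  exact ⟨⟨ha, hb⟩, by funext i; cases i <;> rfl⟩

lemma quad_fromBlocks (A : Matrix n n ℝ) (H : Matrix m m ℝ) (a : n → ℝ) (b : m → ℝ) :
    (Sum.elim a b) ⬝ᵥ ((Matrix.fromBlocks A 0 0 H) *ᵥ Sum.elim a b)
      = a ⬝ᵥ A *ᵥ a + b ⬝ᵥ H *ᵥ b := by
  rw [Matrix.fromBlocks_mulVec]
  simp [sumElim_dotProduct_sumElim]

lemma posCard_fromBlocks {A : Matrix n n ℝ} {H : Matrix m m ℝ}
    (hA : A.IsHermitian) (hH : H.IsHermitian)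
    (hD : (Matrix.fromBlocks A 0 0 H).IsHermitian) :
    posCard hD = posCard hA + posCard hH := by
  classical
  set D := Matrix.fromBlocks A 0 0 H with hDdef
  -- upper bound
  have key1 := key_count D
    (eigSpan hD (Finset.univ.filter fun i => 0 < hD.eigenvalues i))
    (sumSpace (eigSpan hA (Finset.univ.filter fun i => ¬ 0 < hA.eigenvalues i))
      (eigSpan hH (Finset.univ.filter fun i => ¬ 0 < hH.eigenvalues i)))
    (posOn_eigSpan_pos hD) ?_
  have key2 := key_count D
    (sumSpace (eigSpan hA (Finset.univ.filter fun i => 0 < hA.eigenvalues i))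
      (eigSpan hH (Finset.univ.filter fun i => 0 < hH.eigenvalues i)))
    (eigSpan hD (Finset.univ.filter fun i => ¬ 0 < hD.eigenvalues i)) ?_
    (nonposOn_eigSpan_nonpos hD)
  · rw [finrank_eigSpan, finrank_sumSpace, finrank_eigSpan, finrank_eigSpan] at key1
    rw [finrank_eigSpan, finrank_sumSpace, finrank_eigSpan, finrank_eigSpan] at key2
    have hsA := Finset.card_filter_add_card_filter_not
      (s := (Finset.univ : Finset n)) (p := fun i => 0 < hA.eigenvalues i)
    have hsH := Finset.card_filter_add_card_filter_not
      (s := (Finset.univ : Finset m)) (p := fun i => 0 < hH.eigenvalues i)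
    have hsD := Finset.card_filter_add_card_filter_not
      (s := (Finset.univ : Finset (n ⊕ m))) (p := fun i => 0 < hD.eigenvalues i)
    simp only [Finset.card_univ, Fintype.card_sum] at hsA hsH hsD
    have e1 : (Finset.univ.filter fun i => 0 < hA.eigenvalues i).card = posCard hA := rfl
    have e2 : (Finset.univ.filter fun i => 0 < hH.eigenvalues i).card = posCard hH := rfl
    have e3 : (Finset.univ.filter fun i => 0 < hD.eigenvalues i).card = posCard hD := rfl
    have hcard : Fintype.card (n ⊕ m) = Fintype.card n + Fintype.card m := Fintype.card_sum
    omega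
  · -- positive on sumSpace of positive spans
    intro x hx hx0
    obtain ⟨⟨ha, hb⟩, hxe⟩ := mem_sumSpace hx
    rw [hxe, quad_fromBlocks]
    have h0 : ¬ ((fun i => x (Sum.inl i)) = 0 ∧ (fun j => x (Sum.inr j)) = 0) := by
      rintro ⟨h1, h2⟩
      apply hx0
      apply WithLp.ofLp_injective 2
      rw [hxe, h1, h2]
      funext i; cases i <;> rfl
    have ha' : (0:ℝ) ≤ (fun i => x (Sum.inl i)) ⬝ᵥ A *ᵥ (fun i => x (Sum.inl i)) := by
      by_cases h : (fun i => x (Sum.inl i)) = (0 : n → ℝ)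
      · rw [h]; simp
      · exact (posOn_eigSpan_pos hA _ ha (by simpa using h)).le
    have hb' : (0:ℝ) ≤ (fun j => x (Sum.inr j)) ⬝ᵥ H *ᵥ (fun j => x (Sum.inr j)) := by
      by_cases h : (fun j => x (Sum.inr j)) = (0 : m → ℝ)
      · rw [h]; simp
      · exact (posOn_eigSpan_pos hH _ hb (by simpa using h)).le
    rcases not_and_or.mp h0 with h | h
    · have := posOn_eigSpan_pos hA _ ha (by simpa using h)
      linarith
    · have := posOn_eigSpan_pos hH _ hb (by simpa using h)
      linarith
  · -- nonpositive on sumSpace of nonpositive spans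
    intro x hx
    obtain ⟨⟨ha, hb⟩, hxe⟩ := mem_sumSpace hx
    rw [hxe, quad_fromBlocks]
    have h1 := nonposOn_eigSpan_nonpos hA _ ha
    have h2 := nonposOn_eigSpan_nonpos hH _ hb
    linarith

end Blocks

section Blocks2

lemma quad_fromBlocks_neg (A : Matrix n n ℝ) (H : Matrix m m ℝ) (a : n → ℝ) (b : m → ℝ) :
    (Sum.elim a b) ⬝ᵥ ((-Matrix.fromBlocks A 0 0 H) *ᵥ Sum.elim a b)
      = a ⬝ᵥ (-A) *ᵥ a + b ⬝ᵥ (-H) *ᵥ b := by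
  have : -Matrix.fromBlocks A 0 0 H = Matrix.fromBlocks (-A) 0 0 (-H) := by
    rw [Matrix.fromBlocks_neg]; simp
  rw [this, quad_fromBlocks]

lemma negCard_fromBlocks {A : Matrix n n ℝ} {H : Matrix m m ℝ}
    (hA : A.IsHermitian) (hH : H.IsHermitian)
    (hD : (Matrix.fromBlocks A 0 0 H).IsHermitian) :
    negCard hD = negCard hA + negCard hH := by
  classical
  set D := Matrix.fromBlocks A 0 0 H with hDdef
  have key1 := key_count (-D)
    (eigSpan hD (Finset.univ.filter fun i => hD.eigenvalues i < 0))
    (sumSpace (eigSpan hA (Finset.univ.filter fun i => ¬ hA.eigenvalues i < 0))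
      (eigSpan hH (Finset.univ.filter fun i => ¬ hH.eigenvalues i < 0)))
    (posOn_neg_eigSpan_neg hD) ?_
  have key2 := key_count (-D)
    (sumSpace (eigSpan hA (Finset.univ.filter fun i => hA.eigenvalues i < 0))
      (eigSpan hH (Finset.univ.filter fun i => hH.eigenvalues i < 0)))
    (eigSpan hD (Finset.univ.filter fun i => ¬ hD.eigenvalues i < 0)) ?_
    (nonposOn_neg_eigSpan_nonneg hD)
  · rw [finrank_eigSpan, finrank_sumSpace, finrank_eigSpan, finrank_eigSpan] at key1
    rw [finrank_eigSpan, finrank_sumSpace, finrank_eigSpan, finrank_eigSpan] at key2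
    have hsA := Finset.card_filter_add_card_filter_not
      (s := (Finset.univ : Finset n)) (p := fun i => hA.eigenvalues i < 0)
    have hsH := Finset.card_filter_add_card_filter_not
      (s := (Finset.univ : Finset m)) (p := fun i => hH.eigenvalues i < 0)
    have hsD := Finset.card_filter_add_card_filter_not
      (s := (Finset.univ : Finset (n ⊕ m))) (p := fun i => hD.eigenvalues i < 0)
    simp only [Finset.card_univ, Fintype.card_sum] at hsA hsH hsD
    have e1 : (Finset.univ.filter fun i => hA.eigenvalues i < 0).card = negCard hA := rfl
    have e2 : (Finset.univ.filter fun i => hH.eigenvalues i < 0).card = negCard hH := rfl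
    have e3 : (Finset.univ.filter fun i => hD.eigenvalues i < 0).card = negCard hD := rfl
    have hcard : Fintype.card (n ⊕ m) = Fintype.card n + Fintype.card m := Fintype.card_sum
    omega
  · intro x hx hx0
    obtain ⟨⟨ha, hb⟩, hxe⟩ := mem_sumSpace hx
    rw [hxe, quad_fromBlocks_neg]
    have h0 : ¬ ((fun i => x (Sum.inl i)) = 0 ∧ (fun j => x (Sum.inr j)) = 0) := by
      rintro ⟨h1, h2⟩
      apply hx0
      apply WithLp.ofLp_injective 2
      rw [hxe, h1, h2]
      funext i; cases i <;> rfl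
    have ha' : (0:ℝ) ≤ (fun i => x (Sum.inl i)) ⬝ᵥ (-A) *ᵥ (fun i => x (Sum.inl i)) := by
      by_cases h : (fun i => x (Sum.inl i)) = (0 : n → ℝ)
      · rw [h]; simp
      · exact (posOn_neg_eigSpan_neg hA _ ha (by simpa using h)).le
    have hb' : (0:ℝ) ≤ (fun j => x (Sum.inr j)) ⬝ᵥ (-H) *ᵥ (fun j => x (Sum.inr j)) := by
      by_cases h : (fun j => x (Sum.inr j)) = (0 : m → ℝ)
      · rw [h]; simp
      · exact (posOn_neg_eigSpan_neg hH _ hb (by simpa using h)).le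
    rcases not_and_or.mp h0 with h | h
    · have := posOn_neg_eigSpan_neg hA _ ha (by simpa using h)
      linarith
    · have := posOn_neg_eigSpan_neg hH _ hb (by simpa using h)
      linarith
  · intro x hx
    obtain ⟨⟨ha, hb⟩, hxe⟩ := mem_sumSpace hx
    rw [hxe, quad_fromBlocks_neg]
    have h1 := nonposOn_neg_eigSpan_nonneg hA _ ha
    have h2 := nonposOn_neg_eigSpan_nonneg hH _ hb
    linarith

end Blocks2

section Hyp

notation "H₀" => (!![0, 1; 1, 0] : Matrix (Fin 2) (Fin 2) ℝ)

lemma H0_herm : (H₀).IsHermitian := by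
  ext i j
  fin_cases i <;> fin_cases j <;> simp [Matrix.conjTranspose_apply]

lemma quad_H0 (x : Fin 2 → ℝ) : x ⬝ᵥ (H₀ *ᵥ x) = 2 * (x 0 * x 1) := by
  simp [Matrix.mulVec, dotProduct, Fin.sum_univ_succ]
  ring

lemma quad_negH0 (x : Fin 2 → ℝ) : x ⬝ᵥ ((-H₀) *ᵥ x) = -(2 * (x 0 * x 1)) := by
  rw [Matrix.neg_mulVec, dotProduct_neg, quad_H0]

lemma posCard_H0 (hH : (H₀).IsHermitian) : posCard hH = 1 := by
  classical
  have hv1 : (!₂[1,1] : EuclideanSpace ℝ (Fin 2)) ≠ 0 := by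
    intro h
    have := congrArg (fun v : EuclideanSpace ℝ (Fin 2) => v 0) h
    norm_num at this
  have hv2 : (!₂[1,-1] : EuclideanSpace ℝ (Fin 2)) ≠ 0 := by
    intro h
    have := congrArg (fun v : EuclideanSpace ℝ (Fin 2) => v 0) h
    norm_num at this
  set U1 : Submodule ℝ (EuclideanSpace ℝ (Fin 2)) := ℝ ∙ (!₂[1,1] : EuclideanSpace ℝ (Fin 2))
  set U2 : Submodule ℝ (EuclideanSpace ℝ (Fin 2)) := ℝ ∙ (!₂[1,-1] : EuclideanSpace ℝ (Fin 2))
  have hU1 : Module.finrank ℝ U1 = 1 := finrank_span_singleton hv1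
  have hU2 : Module.finrank ℝ U2 = 1 := finrank_span_singleton hv2
  have key1 := key_count (H₀) U1
    (eigSpan hH (Finset.univ.filter fun i => ¬ 0 < hH.eigenvalues i)) ?_
    (nonposOn_eigSpan_nonpos hH)
  have key2 := key_count (H₀)
    (eigSpan hH (Finset.univ.filter fun i => 0 < hH.eigenvalues i)) U2
    (posOn_eigSpan_pos hH) ?_
  · rw [hU1, finrank_eigSpan] at key1
    rw [finrank_eigSpan, hU2] at key2
    have hs := Finset.card_filter_add_card_filter_not
      (s := (Finset.univ : Finset (Fin 2))) (p := fun i => 0 < hH.eigenvalues i)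
    simp only [Finset.card_univ, Fintype.card_fin] at hs
    simp only [Fintype.card_fin] at key1 key2
    have e1 : (Finset.univ.filter fun i => 0 < hH.eigenvalues i).card = posCard hH := rfl
    omega
  · -- NonposOn U2
    intro x hx
    obtain ⟨c, rfl⟩ := Submodule.mem_span_singleton.mp hx
    have h0 : (c • (!₂[1,-1] : EuclideanSpace ℝ (Fin 2))) 0 = c := by norm_num
    have h1 : (c • (!₂[1,-1] : EuclideanSpace ℝ (Fin 2))) 1 = -c := by norm_num
    rw [quad_H0, h0, h1]
    nlinarith [sq_nonneg c]
  · -- PosOn U1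
    intro x hx hx0
    obtain ⟨c, rfl⟩ := Submodule.mem_span_singleton.mp hx
    have hc : c ≠ 0 := by rintro rfl; simp at hx0
    have h0 : (c • (!₂[1,1] : EuclideanSpace ℝ (Fin 2))) 0 = c := by norm_num
    have h1 : (c • (!₂[1,1] : EuclideanSpace ℝ (Fin 2))) 1 = c := by norm_num
    rw [quad_H0, h0, h1]
    have : 0 < c^2 := by positivity
    nlinarith

lemma negCard_H0 (hH : (H₀).IsHermitian) : negCard hH = 1 := by
  classical
  have hv1 : (!₂[1,1] : EuclideanSpace ℝ (Fin 2)) ≠ 0 := by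
    intro h
    have := congrArg (fun v : EuclideanSpace ℝ (Fin 2) => v 0) h
    norm_num at this
  have hv2 : (!₂[1,-1] : EuclideanSpace ℝ (Fin 2)) ≠ 0 := by
    intro h
    have := congrArg (fun v : EuclideanSpace ℝ (Fin 2) => v 0) h
    norm_num at this
  set U1 : Submodule ℝ (EuclideanSpace ℝ (Fin 2)) := ℝ ∙ (!₂[1,1] : EuclideanSpace ℝ (Fin 2))
  set U2 : Submodule ℝ (EuclideanSpace ℝ (Fin 2)) := ℝ ∙ (!₂[1,-1] : EuclideanSpace ℝ (Fin 2))
  have hU1 : Module.finrank ℝ U1 = 1 := finrank_span_singleton hv1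
  have hU2 : Module.finrank ℝ U2 = 1 := finrank_span_singleton hv2
  have key1 := key_count (-(H₀)) U2
    (eigSpan hH (Finset.univ.filter fun i => ¬ hH.eigenvalues i < 0)) ?_
    (nonposOn_neg_eigSpan_nonneg hH)
  have key2 := key_count (-(H₀))
    (eigSpan hH (Finset.univ.filter fun i => hH.eigenvalues i < 0)) U1
    (posOn_neg_eigSpan_neg hH) ?_
  · rw [hU2, finrank_eigSpan] at key1
    rw [finrank_eigSpan, hU1] at key2
    have hs := Finset.card_filter_add_card_filter_not
      (s := (Finset.univ : Finset (Fin 2))) (p := fun i => hH.eigenvalues i < 0)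
    simp only [Finset.card_univ, Fintype.card_fin] at hs
    simp only [Fintype.card_fin] at key1 key2
    have e1 : (Finset.univ.filter fun i => hH.eigenvalues i < 0).card = negCard hH := rfl
    omega
  · intro x hx
    obtain ⟨c, rfl⟩ := Submodule.mem_span_singleton.mp hx
    have h0 : (c • (!₂[1,1] : EuclideanSpace ℝ (Fin 2))) 0 = c := by norm_num
    have h1 : (c • (!₂[1,1] : EuclideanSpace ℝ (Fin 2))) 1 = c := by norm_num
    rw [quad_negH0, h0, h1]
    nlinarith [sq_nonneg c]
  · intro x hx hx0
    obtain ⟨c, rfl⟩ := Submodule.mem_span_singleton.mp hx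
    have hc : c ≠ 0 := by rintro rfl; simp at hx0
    have h0 : (c • (!₂[1,-1] : EuclideanSpace ℝ (Fin 2))) 0 = c := by norm_num
    have h1 : (c • (!₂[1,-1] : EuclideanSpace ℝ (Fin 2))) 1 = -c := by norm_num
    rw [quad_negH0, h0, h1]
    have : 0 < c^2 := by positivity
    nlinarith

end Hyp

section Main

lemma herm_symm_map {k : Type*} [Fintype k] [DecidableEq k] (X : Matrix k k ℤ) :
    ((X + Xᵀ).map (Int.cast : ℤ → ℝ)).IsHermitian := by
  ext i j
  simp [Matrix.conjTranspose_apply, Matrix.map_apply, Matrix.transpose_apply, add_comm]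

/-- For the column-type elementary enlargement `W` of `V`, the signatures of the (real)
symmetrizations agree: `σ(W + Wᵀ) = σ(V + Vᵀ)`. -/
theorem signature_colEnlarge {n : ℕ} (V : Matrix (Fin n) (Fin n) ℤ) (b : Fin n → ℤ) :
    signature ((colEnlarge V b + (colEnlarge V b)ᵀ).map (Int.cast : ℤ → ℝ))
      = signature ((V + Vᵀ).map (Int.cast : ℤ → ℝ)) := by
  classical
  set A' : Matrix (Fin n) (Fin n) ℝ := (V + Vᵀ).map (Int.cast : ℤ → ℝ) with hA'def
  set c : Matrix (Fin n) (Fin 2) ℝ :=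
    Matrix.of (fun i j => if j = 0 then ((b i : ℝ)) else 0) with hcdef
  set S : Matrix (Fin n ⊕ Fin 2) (Fin n ⊕ Fin 2) ℝ :=
    (colEnlarge V b + (colEnlarge V b)ᵀ).map (Int.cast : ℤ → ℝ) with hSdef
  have hS : S = Matrix.fromBlocks A' c cᵀ H₀ := by
    ext x z
    rcases x with i | i <;> rcases z with j | j
    · simp [hSdef, colEnlarge, hA'def, Matrix.map_apply]
    · fin_cases j <;>
        simp [hSdef, colEnlarge, hcdef, Matrix.map_apply]
    · fin_cases i <;>
        simp [hSdef, colEnlarge, hcdef, Matrix.map_apply]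
    · fin_cases i <;> fin_cases j <;>
        simp [hSdef, colEnlarge, Matrix.map_apply]
  have hSh : S.IsHermitian := herm_symm_map _
  have hA'h : A'.IsHermitian := herm_symm_map V
  have hHt : (H₀)ᵀ = H₀ := by
    ext i j; fin_cases i <;> fin_cases j <;> simp
  have hHH : H₀ * H₀ = 1 := by
    ext i j; fin_cases i <;> fin_cases j <;>
      simp [Matrix.mul_apply, Fin.sum_univ_two]
  have hZ : c * H₀ * cᵀ = 0 := by
    ext i j
    simp [Matrix.mul_apply, Fin.sum_univ_two, hcdef]
  set y : Matrix (Fin 2) (Fin n) ℝ := -(H₀ * cᵀ) with hydef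
  set Q : Matrix (Fin n ⊕ Fin 2) (Fin n ⊕ Fin 2) ℝ :=
    Matrix.fromBlocks 1 0 y 1 with hQdef
  have hyt : yᵀ = -(c * H₀) := by
    rw [hydef, Matrix.transpose_neg, Matrix.transpose_mul, Matrix.transpose_transpose, hHt]
  have hZ' : c * (H₀ * cᵀ) = 0 := by rw [← Matrix.mul_assoc]; exact hZ
  have hHHc : H₀ * (H₀ * cᵀ) = cᵀ := by rw [← Matrix.mul_assoc, hHH, Matrix.one_mul]
  have hcHH : c * (H₀ * H₀) = c := by rw [hHH, Matrix.mul_one]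
  have hQS : Qᵀ * S * Q = Matrix.fromBlocks A' 0 0 H₀ := by
    rw [hS, hQdef, Matrix.fromBlocks_transpose, Matrix.transpose_one, Matrix.transpose_zero,
      Matrix.fromBlocks_multiply, Matrix.fromBlocks_multiply]
    simp only [Matrix.one_mul, Matrix.mul_one, Matrix.zero_mul, Matrix.mul_zero,
      add_zero, zero_add]
    rw [hyt, hydef]
    simp only [Matrix.neg_mul, Matrix.mul_neg, neg_neg, Matrix.mul_assoc, hZ', hHHc, hcHH,
      neg_zero, add_zero, add_neg_cancel, neg_add_cancel, Matrix.zero_mul, Matrix.mul_zero,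
      Matrix.one_mul, Matrix.mul_one, zero_add, Matrix.transpose_one]
  have hQinv : Invertible Q := by
    refine ⟨Matrix.fromBlocks 1 0 (-y) 1, ?_, ?_⟩ <;>
      · rw [hQdef, Matrix.fromBlocks_multiply]
        simp [← Matrix.fromBlocks_one]
  have hD : (Matrix.fromBlocks A' 0 0 H₀).IsHermitian := by
    rw [Matrix.isHermitian_fromBlocks_iff]
    refine ⟨hA'h, ?_, ?_, H0_herm⟩ <;> simp
  have hposD : posCard hD = posCard hSh := posCard_congr hSh hD hQinv hQS.symm
  have hnegD : negCard hD = negCard hSh := negCard_congr hSh hD hQinv hQS.symm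
  have hposB : posCard hD = posCard hA'h + 1 := by
    rw [posCard_fromBlocks hA'h H0_herm hD, posCard_H0]
  have hnegB : negCard hD = negCard hA'h + 1 := by
    rw [negCard_fromBlocks hA'h H0_herm hD, negCard_H0]
  have h1 : signature S = (posCard hSh : ℤ) - (negCard hSh : ℤ) := by
    rw [signature, dif_pos hSh]
    rfl
  have h2 : signature A' = (posCard hA'h : ℤ) - (negCard hA'h : ℤ) := by
    rw [signature, dif_pos hA'h]
    rfl
  rw [h1, h2]
  have : posCard hSh = posCard hA'h + 1 := by omega
  have : negCard hSh = negCard hA'h + 1 := by omega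
  omega

end Main
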